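/- Let ν be a Lévy measure on ℝ^d, let 0 < a < ∞, let f : (0,a) → ℝ be measurable with ∫₀^a f(s)² ds < ∞, and let z ∈ ℝ^d. Then ∫₀^a ∫_{ℝ^d} |e^{i⟨f(s)z, x⟩} − 1 − i⟨f(s)z, x⟩/(1 + |x|²)| ν(dx) ds < ∞. -/

import Mathlib

open MeasureTheory

lemma lemA (θ : ℝ) :
    ‖(Complex.exp (Complex.I * θ) - 1 - Complex.I * θ)‖ ≤ 3 * θ ^ 2 := by
  have habs : ‖(Complex.I * θ)‖ = |θ| := by
    rw [norm_mul, Complex.norm_I, Complex.norm_real, Real.norm_eq_abs, one_mul]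
  rcases le_or_gt |θ| 1 with h | h
  · have := Complex.norm_exp_sub_one_sub_id_le (x := Complex.I * θ) (by rw [habs]; exact h)
    rw [habs] at this
    calc ‖(Complex.exp (Complex.I * θ) - 1 - Complex.I * θ)‖ ≤ |θ| ^ 2 := this
      _ = θ ^ 2 := sq_abs θ
      _ ≤ 3 * θ ^ 2 := by nlinarith [sq_nonneg θ]
  · have hexp : ‖(Complex.exp (Complex.I * θ))‖ = 1 := by
      rw [mul_comm, Complex.norm_exp_ofReal_mul_I]
    have htri : ‖(Complex.exp (Complex.I * θ) - 1 - Complex.I * θ)‖ ≤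
        ‖(Complex.exp (Complex.I * θ))‖ + ‖(1 : ℂ)‖ +
          ‖(Complex.I * θ)‖ := by
      calc ‖(Complex.exp (Complex.I * θ) - 1 - Complex.I * θ)‖
          ≤ ‖(Complex.exp (Complex.I * θ) - 1)‖ + ‖(Complex.I * θ)‖ :=
            norm_sub_le _ _
        _ ≤ (‖(Complex.exp (Complex.I * θ))‖ + ‖(1 : ℂ)‖) +
            ‖(Complex.I * θ)‖ := by
            gcongr; exact norm_sub_le _ _
    rw [hexp, habs, norm_one] at htri
    have h2 : |θ| ≤ θ ^ 2 := by nlinarith [abs_nonneg θ, sq_abs θ]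
    nlinarith [sq_abs θ]

lemma lemB (c r θ : ℝ) (hc : 0 ≤ c) (hr : 0 ≤ r) (hθ : |θ| ≤ c * r) :
    ‖(Complex.exp (Complex.I * θ) - 1 - Complex.I * θ / (1 + (r : ℂ) ^ 2))‖ ≤
      (3 * c ^ 2 + c + 2) * min (r ^ 2) 1 := by
  have hX : (0:ℝ) < 1 + r ^ 2 := by positivity
  have hcast : (1 + (r : ℂ) ^ 2) = ((1 + r ^ 2 : ℝ) : ℂ) := by push_cast; ring
  have habsθ : ‖(Complex.I * θ)‖ = |θ| := by
    rw [norm_mul, Complex.norm_I, Complex.norm_real, Real.norm_eq_abs, one_mul]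
  rcases le_or_gt r 1 with h | h
  · have hmin : min (r ^ 2) 1 = r ^ 2 := min_eq_left (by nlinarith)
    rw [hmin]
    have hsplit : Complex.exp (Complex.I * θ) - 1 - Complex.I * θ / (1 + (r : ℂ) ^ 2) =
        (Complex.exp (Complex.I * θ) - 1 - Complex.I * θ) +
          Complex.I * θ * (1 - 1 / (1 + (r : ℂ) ^ 2)) := by ring
    rw [hsplit]
    have hB : ‖(Complex.I * θ * (1 - 1 / (1 + (r : ℂ) ^ 2)))‖ = |θ| * (r ^ 2 / (1 + r ^ 2)) := by
      rw [norm_mul, habsθ, hcast]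
      congr 1
      have hXC : ((1 + r ^ 2 : ℝ) : ℂ) ≠ 0 := by exact_mod_cast hX.ne'
      have hXC2 : (1 : ℂ) + (r : ℂ) ^ 2 ≠ 0 := by push_cast at hXC; exact hXC
      have : (1 : ℂ) - 1 / ((1 + r ^ 2 : ℝ) : ℂ) = ((r ^ 2 / (1 + r ^ 2) : ℝ) : ℂ) := by
        field_simp
        rw [Complex.ofReal_div, mul_div_cancel₀ _ hXC]; push_cast; ring
      rw [this, Complex.norm_real, Real.norm_eq_abs, abs_of_nonneg (by positivity)]
    calc ‖_‖ ≤ ‖(Complex.exp (Complex.I * θ) - 1 - Complex.I * θ)‖ +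
          ‖(Complex.I * θ * (1 - 1 / (1 + (r : ℂ) ^ 2)))‖ := norm_add_le _ _
      _ ≤ 3 * θ ^ 2 + |θ| * (r ^ 2 / (1 + r ^ 2)) := by rw [hB]; gcongr; exact lemA θ
      _ ≤ (3 * c ^ 2 + c + 2) * r ^ 2 := by
          have h1 : θ ^ 2 ≤ (c * r) ^ 2 := by
            rw [← sq_abs θ]; exact pow_le_pow_left₀ (abs_nonneg θ) hθ 2
          have h2 : r ^ 2 / (1 + r ^ 2) ≤ r ^ 2 := by
            rw [div_le_iff₀ hX]; nlinarith
          have h3 : |θ| * (r ^ 2 / (1 + r ^ 2)) ≤ (c * r) * r ^ 2 :=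
            mul_le_mul hθ h2 (by positivity) (by positivity)
          have h4 : c * r * r ^ 2 ≤ c * r ^ 2 := by nlinarith [mul_nonneg hc (sq_nonneg r)]
          have h5 : (c * r) ^ 2 = c ^ 2 * r ^ 2 := by ring
          nlinarith [sq_nonneg r]
  · have hmin : min (r ^ 2) 1 = 1 := min_eq_right (by nlinarith)
    rw [hmin, mul_one]
    have hexp : ‖(Complex.exp (Complex.I * θ))‖ = 1 := by
      rw [mul_comm, Complex.norm_exp_ofReal_mul_I]
    have hdiv : ‖(Complex.I * θ / (1 + (r : ℂ) ^ 2))‖ = |θ| / (1 + r ^ 2) := by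
      rw [norm_div, habsθ, hcast, Complex.norm_real, Real.norm_eq_abs, abs_of_pos hX]
    calc ‖(Complex.exp (Complex.I * θ) - 1 - Complex.I * θ / (1 + (r : ℂ) ^ 2))‖
        ≤ ‖(Complex.exp (Complex.I * θ) - 1)‖ +
            ‖(Complex.I * θ / (1 + (r : ℂ) ^ 2))‖ := norm_sub_le _ _
      _ ≤ (‖(Complex.exp (Complex.I * θ))‖ + ‖(1 : ℂ)‖) +
            |θ| / (1 + r ^ 2) := by rw [hdiv]; gcongr; exact norm_sub_le _ _
      _ = 2 + |θ| / (1 + r ^ 2) := by rw [hexp, norm_one]; ring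
      _ ≤ 3 * c ^ 2 + c + 2 := by
          have h1 : |θ| / (1 + r ^ 2) ≤ c * r / (1 + r ^ 2) := by gcongr
          have h2 : c * r / (1 + r ^ 2) ≤ c := by
            rw [div_le_iff₀ hX]
            nlinarith [mul_nonneg hc (sq_nonneg (r - 1)), mul_nonneg hc hr]
          nlinarith [sq_nonneg c]

/-- Integrability of the Lévy–Khintchine integrand along a square-integrable kernel:
`∫₀^a ∫ |g(f(s)z, x)| ν(dx) ds < ∞`. -/
theorem stmt_19 (d : ℕ) (hd : 1 ≤ d)
    (ν : Measure (EuclideanSpace ℝ (Fin d)))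
    (hν0 : ν {0} = 0)
    (hνfin : ∫⁻ x, ENNReal.ofReal (min (‖x‖ ^ 2) 1) ∂ν < ⊤)
    (a : ℝ) (ha : 0 < a) (f : ℝ → ℝ) (hf : Measurable f)
    (hf2 : ∫⁻ s in Set.Ioo 0 a, ENNReal.ofReal (f s ^ 2) < ⊤)
    (z : EuclideanSpace ℝ (Fin d)) :
    ∫⁻ s in Set.Ioo (0 : ℝ) a, ∫⁻ x, ENNReal.ofReal (‖(Complex.exp (Complex.I * ((inner ℝ (f s • z) x : ℝ) : ℂ)) - 1 -
          Complex.I * ((inner ℝ (f s • z) x : ℝ) : ℂ) / (1 + (‖x‖ : ℂ) ^ 2))‖) ∂ν < ⊤ := by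
  set M := ∫⁻ x, ENNReal.ofReal (min (‖x‖ ^ 2) 1) ∂ν with hMdef
  set C : ℝ → ℝ := fun s => 3 * (|f s| * ‖z‖) ^ 2 + |f s| * ‖z‖ + 2 with hCdef
  have hCnn : ∀ s, 0 ≤ C s := by
    intro s
    have := abs_nonneg (f s); have := norm_nonneg z
    positivity
  have key : ∀ s : ℝ, (∫⁻ x, ENNReal.ofReal (‖(Complex.exp (Complex.I * ((inner ℝ (f s • z) x : ℝ) : ℂ)) - 1 -
          Complex.I * ((inner ℝ (f s • z) x : ℝ) : ℂ) / (1 + (‖x‖ : ℂ) ^ 2))‖) ∂ν) ≤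
      ENNReal.ofReal (C s) * M := by
    intro s
    have hb : ∀ x : EuclideanSpace ℝ (Fin d), ENNReal.ofReal (‖(Complex.exp (Complex.I * ((inner ℝ (f s • z) x : ℝ) : ℂ)) - 1 -
          Complex.I * ((inner ℝ (f s • z) x : ℝ) : ℂ) / (1 + (‖x‖ : ℂ) ^ 2))‖) ≤
        ENNReal.ofReal (C s) * ENNReal.ofReal (min (‖x‖ ^ 2) 1) := by
      intro x
      have hθ : |(inner ℝ (f s • z) x : ℝ)| ≤ (|f s| * ‖z‖) * ‖x‖ := by
        calc |(inner ℝ (f s • z) x : ℝ)| ≤ ‖f s • z‖ * ‖x‖ := abs_real_inner_le_norm _ _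
          _ = (|f s| * ‖z‖) * ‖x‖ := by rw [norm_smul, Real.norm_eq_abs]
      have hle := lemB (|f s| * ‖z‖) ‖x‖ (inner ℝ (f s • z) x)
        (by positivity) (norm_nonneg x) hθ
      calc ENNReal.ofReal _ ≤ ENNReal.ofReal ((3 * (|f s| * ‖z‖) ^ 2 + |f s| * ‖z‖ + 2) *
            min (‖x‖ ^ 2) 1) := ENNReal.ofReal_le_ofReal hle
        _ = ENNReal.ofReal (C s) * ENNReal.ofReal (min (‖x‖ ^ 2) 1) :=
            ENNReal.ofReal_mul (hCnn s)
    calc (∫⁻ x, ENNReal.ofReal (‖(Complex.exp (Complex.I * ((inner ℝ (f s • z) x : ℝ) : ℂ)) - 1 -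
          Complex.I * ((inner ℝ (f s • z) x : ℝ) : ℂ) / (1 + (‖x‖ : ℂ) ^ 2))‖) ∂ν)
        ≤ ∫⁻ x, ENNReal.ofReal (C s) * ENNReal.ofReal (min (‖x‖ ^ 2) 1) ∂ν :=
          lintegral_mono hb
      _ = ENNReal.ofReal (C s) * M := lintegral_const_mul' _ _ ENNReal.ofReal_ne_top
  have hCint : ∫⁻ s in Set.Ioo (0 : ℝ) a, ENNReal.ofReal (C s) < ⊤ := by
    have hbound : ∀ s, ENNReal.ofReal (C s) ≤
        ENNReal.ofReal (3 * ‖z‖ ^ 2 + ‖z‖ / 2) * ENNReal.ofReal (f s ^ 2) +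
          ENNReal.ofReal (‖z‖ / 2 + 2) := by
      intro s
      have h1 : |f s| ≤ (f s ^ 2 + 1) / 2 := by nlinarith [sq_nonneg (|f s| - 1), sq_abs (f s)]
      have h2 : C s ≤ (3 * ‖z‖ ^ 2 + ‖z‖ / 2) * f s ^ 2 + (‖z‖ / 2 + 2) := by
        have hz := norm_nonneg z
        have h3 : (|f s| * ‖z‖) ^ 2 = f s ^ 2 * ‖z‖ ^ 2 := by
          rw [mul_pow, sq_abs]
        have h4 : |f s| * ‖z‖ ≤ ((f s ^ 2 + 1) / 2) * ‖z‖ :=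
          mul_le_mul_of_nonneg_right h1 hz
        rw [hCdef]; dsimp only
        nlinarith [sq_nonneg (f s)]
      calc ENNReal.ofReal (C s) ≤ ENNReal.ofReal ((3 * ‖z‖ ^ 2 + ‖z‖ / 2) * f s ^ 2 +
          (‖z‖ / 2 + 2)) := ENNReal.ofReal_le_ofReal h2
        _ ≤ ENNReal.ofReal ((3 * ‖z‖ ^ 2 + ‖z‖ / 2) * f s ^ 2) +
            ENNReal.ofReal (‖z‖ / 2 + 2) := ENNReal.ofReal_add_le
        _ = ENNReal.ofReal (3 * ‖z‖ ^ 2 + ‖z‖ / 2) * ENNReal.ofReal (f s ^ 2) +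
            ENNReal.ofReal (‖z‖ / 2 + 2) := by
            rw [ENNReal.ofReal_mul (by positivity)]
    calc ∫⁻ s in Set.Ioo (0 : ℝ) a, ENNReal.ofReal (C s)
        ≤ ∫⁻ s in Set.Ioo (0 : ℝ) a, (ENNReal.ofReal (3 * ‖z‖ ^ 2 + ‖z‖ / 2) *
            ENNReal.ofReal (f s ^ 2) + ENNReal.ofReal (‖z‖ / 2 + 2)) :=
          lintegral_mono fun s => hbound s
      _ = ENNReal.ofReal (3 * ‖z‖ ^ 2 + ‖z‖ / 2) *
            (∫⁻ s in Set.Ioo (0 : ℝ) a, ENNReal.ofReal (f s ^ 2)) +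
            ENNReal.ofReal (‖z‖ / 2 + 2) * volume (Set.Ioo (0 : ℝ) a) := by
          rw [lintegral_add_right _ measurable_const, lintegral_const,
            lintegral_const_mul' _ _ ENNReal.ofReal_ne_top, Measure.restrict_apply
            MeasurableSet.univ, Set.univ_inter]
      _ < ⊤ := by
          apply ENNReal.add_lt_top.2
          constructor
          · exact ENNReal.mul_lt_top ENNReal.ofReal_lt_top hf2
          · exact ENNReal.mul_lt_top ENNReal.ofReal_lt_top (by simp [Real.volume_Ioo])
  calc ∫⁻ s in Set.Ioo (0 : ℝ) a, ∫⁻ x, ENNReal.ofReal (‖(Complex.exp (Complex.I * ((inner ℝ (f s • z) x : ℝ) : ℂ)) - 1 -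
          Complex.I * ((inner ℝ (f s • z) x : ℝ) : ℂ) / (1 + (‖x‖ : ℂ) ^ 2))‖) ∂ν
      ≤ ∫⁻ s in Set.Ioo (0 : ℝ) a, ENNReal.ofReal (C s) * M :=
        lintegral_mono fun s => key s
    _ = (∫⁻ s in Set.Ioo (0 : ℝ) a, ENNReal.ofReal (C s)) * M :=
        lintegral_mul_const' _ _ hνfin.ne
    _ < ⊤ := ENNReal.mul_lt_top hCint hνfin
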